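/- Let Γ be a group, R a Γ-graded ring, and let (K_1, φ_1) and (K_2, φ_2) be Γ-graded epic R-division rings. If {A ∈ 𝔐(R) : A^{φ_1} is invertible over K_1} = {A ∈ 𝔐(R) : A^{φ_2} is invertible over K_2}, then there exists an isomorphism of Γ-graded rings ψ : K_1 → K_2 (a ring isomorphism with ψ((K_1)_γ) = (K_2)_γ for all γ ∈ Γ) such that ψ ∘ φ_1 = φ_2. -/

import Mathlib

open Matrix

universe u v w

section GradedDefs

variable {Γ : Type u} [Group Γ] {R : Type v} [Ring R]

/-- `A` is a homogeneous matrix of distribution `(α, β)`: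
its `(i,j)` entry lies in `𝒜 (α i * (β j)⁻¹)`. -/
def IsHomog (𝒜 : Γ → AddSubgroup R) {m n : ℕ}
    (A : Matrix (Fin m) (Fin n) R) (α : Fin m → Γ) (β : Fin n → Γ) : Prop :=
  ∀ i j, A i j ∈ 𝒜 (α i * (β j)⁻¹)

/-- `A` is a homogeneous matrix for some distribution. -/
def IsHomogSq (𝒜 : Γ → AddSubgroup R) {m n : ℕ}
    (A : Matrix (Fin m) (Fin n) R) : Prop :=
  ∃ (α : Fin m → Γ) (β : Fin n → Γ), IsHomog 𝒜 A α β

end GradedDefs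

/-- Square matrices over `R` of arbitrary finite size. -/
abbrev SqMat (R : Type v) : Type v := Σ n : ℕ, Matrix (Fin n) (Fin n) R

section GradedDefs

variable {Γ : Type u} [Group Γ] {R : Type v} [Ring R]

/-- Diagonal sum `A ⊕ B` of two (rectangular) matrices. -/
def diagSum {m n m' n' : ℕ} (A : Matrix (Fin m) (Fin n) R)
    (B : Matrix (Fin m') (Fin n') R) : Matrix (Fin (m + m')) (Fin (n + n')) R :=
  Matrix.reindex finSumFinEquiv finSumFinEquiv (Matrix.fromBlocks A 0 0 B)

/-- Block lower triangular matrix `[[A, 0], [C, B]]`. -/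
def lowerBlockSum {n m : ℕ} (A : Matrix (Fin n) (Fin n) R) (B : Matrix (Fin m) (Fin m) R)
    (C : Matrix (Fin m) (Fin n) R) : Matrix (Fin (n + m)) (Fin (n + m)) R :=
  Matrix.reindex finSumFinEquiv finSumFinEquiv (Matrix.fromBlocks A 0 C B)

/-- Block upper triangular matrix `[[A, C], [0, B]]` with rectangular blocks. -/
def upperBlockSum {m n m' n' : ℕ} (A : Matrix (Fin m) (Fin n) R)
    (B : Matrix (Fin m') (Fin n') R) (C : Matrix (Fin m) (Fin n') R) :
    Matrix (Fin (m + m')) (Fin (n + n')) R :=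
  Matrix.reindex finSumFinEquiv finSumFinEquiv (Matrix.fromBlocks A C 0 B)

/-- `C` is the determinantal sum of `A` and `B` with respect to some column or row:
`A` and `B` agree away from that column (row) and the distinguished column (row) of `C`
is the sum of the corresponding columns (rows) of `A` and `B`. -/
def IsDetSum {n : ℕ} (A B C : Matrix (Fin n) (Fin n) R) : Prop :=
  (∃ c : Fin n, (∀ i j, j ≠ c → A i j = B i j) ∧
      ∀ i j, C i j = if j = c then A i j + B i j else A i j) ∨
  (∃ r : Fin n, (∀ i j, i ≠ r → A i j = B i j) ∧
      ∀ i j, C i j = if i = r then A i j + B i j else A i j)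

/-- `C` is the determinantal sum of the homogeneous matrices `A` and `B`
(which have a common distribution). -/
def GrDetSum (𝒜 : Γ → AddSubgroup R) {n : ℕ} (A B C : Matrix (Fin n) (Fin n) R) : Prop :=
  (∃ α β : Fin n → Γ, IsHomog 𝒜 A α β ∧ IsHomog 𝒜 B α β) ∧ IsDetSum A B C

/-- A square homogeneous matrix `A` is gr-full if whenever `A = P * Q` with `P`
homogeneous of distribution `(α, lam)` and `Q` homogeneous of distribution `(lam, β)`
where `lam` has length `r`, then `r ≥ n`. -/
def IsGrFull (𝒜 : Γ → AddSubgroup R) {n : ℕ} (A : Matrix (Fin n) (Fin n) R) : Prop :=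
  ∀ (r : ℕ) (P : Matrix (Fin n) (Fin r) R) (Q : Matrix (Fin r) (Fin n) R)
    (α : Fin n → Γ) (lam : Fin r → Γ) (β : Fin n → Γ),
    IsHomog 𝒜 P α lam → IsHomog 𝒜 Q lam β → A = P * Q → n ≤ r

/-- gr-prime matrix ideal: a set of square homogeneous matrices satisfying (PM1)–(PM6). -/
structure IsGrPrimeMatrixIdeal (𝒜 : Γ → AddSubgroup R) (P : Set (SqMat R)) : Prop where
  subset_homog : ∀ p ∈ P, IsHomogSq 𝒜 p.2
  pm1 : ∀ {n : ℕ} (A : Matrix (Fin n) (Fin n) R),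
    IsHomogSq 𝒜 A → ¬ IsGrFull 𝒜 A → (⟨n, A⟩ : SqMat R) ∈ P
  pm2 : ∀ {n : ℕ} (A B C : Matrix (Fin n) (Fin n) R),
    (⟨n, A⟩ : SqMat R) ∈ P → (⟨n, B⟩ : SqMat R) ∈ P → GrDetSum 𝒜 A B C →
    (⟨n, C⟩ : SqMat R) ∈ P
  pm3 : ∀ {m n : ℕ} (A : Matrix (Fin m) (Fin m) R) (B : Matrix (Fin n) (Fin n) R),
    (⟨m, A⟩ : SqMat R) ∈ P → IsHomogSq 𝒜 B → (⟨m + n, diagSum A B⟩ : SqMat R) ∈ P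
  pm4 : ∀ {m n : ℕ} (A : Matrix (Fin m) (Fin m) R) (B : Matrix (Fin n) (Fin n) R),
    IsHomogSq 𝒜 A → IsHomogSq 𝒜 B → (⟨m + n, diagSum A B⟩ : SqMat R) ∈ P →
    (⟨m, A⟩ : SqMat R) ∈ P ∨ (⟨n, B⟩ : SqMat R) ∈ P
  pm5 : (⟨1, (1 : Matrix (Fin 1) (Fin 1) R)⟩ : SqMat R) ∉ P
  pm6 : ∀ {n : ℕ} (A : Matrix (Fin n) (Fin n) R) (e f : Equiv.Perm (Fin n)),
    (⟨n, A⟩ : SqMat R) ∈ P → (⟨n, A.submatrix ⇑e ⇑f⟩ : SqMat R) ∈ P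

/-- gr-matrix ideal: a set of square homogeneous matrices satisfying (I1)–(I5). -/
structure IsGrMatrixIdeal (𝒜 : Γ → AddSubgroup R) (I : Set (SqMat R)) : Prop where
  subset_homog : ∀ p ∈ I, IsHomogSq 𝒜 p.2
  i1 : ∀ {n : ℕ} (A : Matrix (Fin n) (Fin n) R),
    IsHomogSq 𝒜 A → ¬ IsGrFull 𝒜 A → (⟨n, A⟩ : SqMat R) ∈ I
  i2 : ∀ {n : ℕ} (A B C : Matrix (Fin n) (Fin n) R),
    (⟨n, A⟩ : SqMat R) ∈ I → (⟨n, B⟩ : SqMat R) ∈ I → GrDetSum 𝒜 A B C →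
    (⟨n, C⟩ : SqMat R) ∈ I
  i3 : ∀ {m n : ℕ} (A : Matrix (Fin m) (Fin m) R) (B : Matrix (Fin n) (Fin n) R),
    (⟨m, A⟩ : SqMat R) ∈ I → IsHomogSq 𝒜 B → (⟨m + n, diagSum A B⟩ : SqMat R) ∈ I
  i4 : ∀ {n : ℕ} (A : Matrix (Fin n) (Fin n) R) (e f : Equiv.Perm (Fin n)),
    (⟨n, A⟩ : SqMat R) ∈ I → (⟨n, A.submatrix ⇑e ⇑f⟩ : SqMat R) ∈ I
  i5 : ∀ {n : ℕ} (A : Matrix (Fin n) (Fin n) R),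
    (⟨n + 1, diagSum A (1 : Matrix (Fin 1) (Fin 1) R)⟩ : SqMat R) ∈ I →
    (⟨n, A⟩ : SqMat R) ∈ I

/-- The diagonal sum of `r` copies of `A`. -/
def diagIter {n : ℕ} (A : Matrix (Fin n) (Fin n) R) :
    (r : ℕ) → Matrix (Fin (n * r)) (Fin (n * r)) R
  | 0 => 0
  | r + 1 => diagSum (diagIter A r) A

/-- Iterated determinantal sums (with arbitrary bracketing) of elements of `W`. -/
inductive IsDetSumOf (𝒜 : Γ → AddSubgroup R) (W : Set (SqMat R)) : SqMat R → Prop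
  | base (p : SqMat R) (hp : p ∈ W) : IsDetSumOf 𝒜 W p
  | step {n : ℕ} (A B C : Matrix (Fin n) (Fin n) R)
      (hA : IsDetSumOf 𝒜 W ⟨n, A⟩) (hB : IsDetSumOf 𝒜 W ⟨n, B⟩)
      (h : GrDetSum 𝒜 A B C) : IsDetSumOf 𝒜 W ⟨n, C⟩

/-- The homogeneous rational closure of degree `γ`: entries `(j,i)` of inverses of matrices
`A^f` with `A ∈ Sig` homogeneous of distribution `(α, β)` and `β j * (α i)⁻¹ = γ`. -/
def RatCl (𝒜 : Γ → AddSubgroup R) {S : Type w} [Ring S] (Sig : Set (SqMat R)) (f : R →+* S)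
    (γ : Γ) : Set S :=
  {x | ∃ (n : ℕ) (A : Matrix (Fin n) (Fin n) R) (α β : Fin n → Γ) (i j : Fin n)
        (B : Matrix (Fin n) (Fin n) S),
      (⟨n, A⟩ : SqMat R) ∈ Sig ∧ IsHomog 𝒜 A α β ∧ β j * (α i)⁻¹ = γ ∧
      (A.map ⇑f) * B = 1 ∧ B * (A.map ⇑f) = 1 ∧ B j i = x}

/-- gr-lower semimultiplicative set of square homogeneous matrices. -/
def IsGrLowerSemimult (𝒜 : Γ → AddSubgroup R) (Sig : Set (SqMat R)) : Prop :=
  ((⟨1, (1 : Matrix (Fin 1) (Fin 1) R)⟩ : SqMat R) ∈ Sig) ∧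
  ∀ {n m : ℕ} (A : Matrix (Fin n) (Fin n) R) (B : Matrix (Fin m) (Fin m) R)
    (α β : Fin n → Γ) (α' β' : Fin m → Γ) (C : Matrix (Fin m) (Fin n) R),
    (⟨n, A⟩ : SqMat R) ∈ Sig → (⟨m, B⟩ : SqMat R) ∈ Sig →
    IsHomog 𝒜 A α β → IsHomog 𝒜 B α' β' → IsHomog 𝒜 C α' β →
    (⟨n + m, lowerBlockSum A B C⟩ : SqMat R) ∈ Sig

end GradedDefs

/-- A homomorphism of `Γ`-graded rings from `(R, 𝒜)` to a `Γ`-graded division ring. -/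
structure GrDivRingHom (Γ : Type u) [Group Γ] [DecidableEq Γ] (R : Type v) [Ring R]
    (𝒜 : Γ → AddSubgroup R) where
  K : Type (max u v)
  [ringK : Ring K]
  [nontrivialK : Nontrivial K]
  grading : Γ → AddSubgroup K
  internal : DirectSum.IsInternal grading
  one_mem : (1 : K) ∈ grading 1
  mul_mem : ∀ {γ δ : Γ} {x y : K}, x ∈ grading γ → y ∈ grading δ → x * y ∈ grading (γ * δ)
  isUnit_of_ne : ∀ {γ : Γ} {x : K}, x ∈ grading γ → x ≠ 0 → IsUnit x
  φ : R →+* K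
  map_mem : ∀ {γ : Γ} {r : R}, r ∈ 𝒜 γ → φ r ∈ grading γ

attribute [instance] GrDivRingHom.ringK GrDivRingHom.nontrivialK

set_option linter.unusedSectionVars false
set_option synthInstance.maxHeartbeats 400000
open Matrix DirectSum
open scoped Classical

namespace GrProof

variable {Γ : Type u} [Group Γ] [DecidableEq Γ] {K : Type w} [Ring K]

section Proj
variable (g : Γ → AddSubgroup K)

noncomputable def dec (h : DirectSum.IsInternal g) : (⨁ γ : Γ, (g γ)) ≃+ K :=
  AddEquiv.ofBijective (DirectSum.coeAddMonoidHom g) h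

noncomputable def pr (h : DirectSum.IsInternal g) (γ : Γ) (x : K) : K :=
  ((dec g h).symm x γ : K)

variable (h : DirectSum.IsInternal g)

lemma pr_mem (γ : Γ) (x : K) : pr g h γ x ∈ g γ := ((dec g h).symm x γ).2

lemma pr_add (γ : Γ) (x y : K) : pr g h γ (x + y) = pr g h γ x + pr g h γ y := by
  show (((dec g h).symm (x + y)) γ : K) = _
  rw [map_add, DirectSum.add_apply]; rfl

lemma pr_zero (γ : Γ) : pr g h γ (0 : K) = 0 := by
  show (((dec g h).symm (0:K)) γ : K) = 0
  rw [map_zero]; rfl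

lemma pr_neg (γ : Γ) (x : K) : pr g h γ (-x) = - pr g h γ x := by
  have h1 := pr_add g h γ x (-x)
  rw [add_neg_cancel, pr_zero] at h1
  exact (neg_eq_of_add_eq_zero_right h1.symm).symm

lemma pr_sum {ι : Type*} (s : Finset ι) (f : ι → K) (γ : Γ) :
    pr g h γ (∑ i ∈ s, f i) = ∑ i ∈ s, pr g h γ (f i) := by
  classical
  induction s using Finset.induction_on with
  | empty => simpa using pr_zero g h γ
  | insert a s hx ih => rw [Finset.sum_insert hx, Finset.sum_insert hx, pr_add, ih]

lemma dec_apply (d : ⨁ γ : Γ, (g γ)) : dec g h d = ∑ γ ∈ DFinsupp.support d, (d γ : K) := by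
  conv_lhs => rw [← DirectSum.sum_support_of d]
  rw [map_sum]
  refine Finset.sum_congr rfl fun γ _ => ?_
  exact DirectSum.coeAddMonoidHom_of g γ (d γ)

lemma pr_of_mem {δ : Γ} {x : K} (hx : x ∈ g δ) (γ : Γ) :
    pr g h γ x = if γ = δ then x else 0 := by
  have hd : (dec g h).symm x = DirectSum.of (fun γ => g γ) δ ⟨x, hx⟩ := by
    apply (dec g h).injective
    rw [AddEquiv.apply_symm_apply]
    exact (DirectSum.coeAddMonoidHom_of g δ ⟨x, hx⟩).symm
  unfold pr
  rw [hd]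
  by_cases hγ : γ = δ
  · subst hγ; rw [DirectSum.of_eq_same]; simp
  · rw [DirectSum.of_eq_of_ne _ _ _ hγ]; simp [hγ]

lemma sum_pr (x : K) : ∑ γ ∈ DFinsupp.support ((dec g h).symm x), pr g h γ x = x := by
  conv_rhs => rw [← (dec g h).apply_symm_apply x]
  rw [dec_apply]; rfl

lemma eq_zero_of_pr (x : K) (hx : ∀ γ, pr g h γ x = 0) : x = 0 := by
  rw [← sum_pr g h x]
  exact Finset.sum_eq_zero fun γ _ => hx γ

lemma pr_not_support {x : K} {γ : Γ} (hγ : γ ∉ DFinsupp.support ((dec g h).symm x)) :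
    pr g h γ x = 0 := by
  unfold pr
  rw [DFinsupp.notMem_support_iff.1 hγ]; rfl

lemma mem_of_pr (x : K) (γ : Γ) (hx : ∀ δ, δ ≠ γ → pr g h δ x = 0) : x ∈ g γ := by
  rw [← sum_pr g h x]
  refine AddSubgroup.sum_mem _ fun δ _ => ?_
  by_cases hδ : δ = γ
  · subst hδ; exact pr_mem g h δ x
  · rw [hx δ hδ]; exact (g γ).zero_mem

lemma pr_one (hone : (1 : K) ∈ g 1) (γ : Γ) : pr g h γ (1 : K) = if γ = 1 then 1 else 0 :=
  pr_of_mem g h hone γ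

/-- Left compatibility: projecting `a * b` when `a` is homogeneous. -/
lemma pr_mul_left (hmul : ∀ {γ δ : Γ} {x y : K}, x ∈ g γ → y ∈ g δ → x * y ∈ g (γ * δ))
    {gdeg : Γ} {a : K} (ha : a ∈ g gdeg) (δ : Γ) (b : K) :
    pr g h (gdeg * δ) (a * b) = a * pr g h δ b := by
  classical
  conv_lhs => rw [← sum_pr g h b, Finset.mul_sum, pr_sum]
  have : ∀ η ∈ DFinsupp.support ((dec g h).symm b),
      pr g h (gdeg * δ) (a * pr g h η b) = if η = δ then a * pr g h η b else 0 := by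
    intro η _
    rw [pr_of_mem g h (hmul ha (pr_mem g h η b))]
    congr 1
    simp [mul_left_cancel_iff, eq_comm]
  rw [Finset.sum_congr rfl this, Finset.sum_ite_eq']
  by_cases hδ : δ ∈ DFinsupp.support ((dec g h).symm b)
  · simp [hδ]
  · rw [if_neg hδ, pr_not_support g h hδ, mul_zero]

/-- Expansion of a product's component as a sum over any superset of the support. -/
lemma pr_mul (hmul : ∀ {γ δ : Γ} {x y : K}, x ∈ g γ → y ∈ g δ → x * y ∈ g (γ * δ))
    (x y : K) (δ : Γ) (s : Finset Γ) (hs : DFinsupp.support ((dec g h).symm x) ⊆ s) :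
    pr g h δ (x * y) = ∑ γ ∈ s, pr g h γ x * pr g h (γ⁻¹ * δ) y := by
  classical
  have hx : x = ∑ γ ∈ s, pr g h γ x := by
    rw [← Finset.sum_subset hs (fun γ _ hγ => pr_not_support g h hγ), sum_pr]
  conv_lhs => rw [hx]
  rw [Finset.sum_mul, pr_sum]
  refine Finset.sum_congr rfl fun γ _ => ?_
  have hδ : δ = γ * (γ⁻¹ * δ) := by group
  rw [hδ, pr_mul_left g h hmul (pr_mem g h γ x), ← hδ]
  
end Proj

section InvHomog
variable (g : Γ → AddSubgroup K) (h : DirectSum.IsInternal g)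

include h in
/-- The inverse of an invertible homogeneous matrix is homogeneous (with swapped
distribution). -/
lemma inv_homog (hone : (1 : K) ∈ g 1)
    (hmul : ∀ {γ δ : Γ} {x y : K}, x ∈ g γ → y ∈ g δ → x * y ∈ g (γ * δ))
    {n : ℕ} {M N : Matrix (Fin n) (Fin n) K} {α β : Fin n → Γ}
    (hM : ∀ i j, M i j ∈ g (α i * (β j)⁻¹))
    (hMN : M * N = 1) (hNM : N * M = 1) :
    ∀ i j, N i j ∈ g (β i * (α j)⁻¹) := by
  classical
  set N' : Matrix (Fin n) (Fin n) K := Matrix.of fun i j => pr g h (β i * (α j)⁻¹) (N i j)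
    with hN'
  have hMN' : M * N' = 1 := by
    ext i k
    have : ∀ j, M i j * pr g h (β j * (α k)⁻¹) (N j k)
        = pr g h (α i * (α k)⁻¹) (M i j * N j k) := by
      intro j
      have e : α i * (α k)⁻¹ = (α i * (β j)⁻¹) * (β j * (α k)⁻¹) := by group
      rw [e, pr_mul_left g h hmul (hM i j)]
    show (∑ j, M i j * pr g h (β j * (α k)⁻¹) (N j k)) = (1 : Matrix (Fin n) (Fin n) K) i k
    rw [Finset.sum_congr rfl (fun j _ => this j), ← pr_sum]
    have : (∑ j, M i j * N j k) = (1 : Matrix (Fin n) (Fin n) K) i k := by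
      rw [← Matrix.mul_apply, hMN]
    rw [this]
    by_cases hik : i = k
    · subst hik
      rw [Matrix.one_apply_eq, pr_of_mem g h hone]
      simp
    · rw [Matrix.one_apply_ne hik, pr_zero]
  have : N = N' := by
    calc N = N * 1 := by rw [Matrix.mul_one]
    _ = N * (M * N') := by rw [hMN']
    _ = (N * M) * N' := by rw [Matrix.mul_assoc]
    _ = N' := by rw [hNM, Matrix.one_mul]
  intro i j
  rw [this]
  exact pr_mem g h _ _

end InvHomog

section Blocks
variable {S : Type*} [Ring S] {S' : Type*} [Ring S']

/-- The 1×1 matrix with entry `x`. -/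
def sc (x : S) : Matrix (Fin 1) (Fin 1) S := Matrix.of fun _ _ => x

@[simp] lemma sc_apply (x : S) (i j : Fin 1) : sc x i j = x := rfl

lemma sc_mul (x y : S) : sc x * sc y = sc (x * y) := by
  ext i j; simp [Matrix.mul_apply, sc]

lemma sc_add (x y : S) : sc x + sc y = sc (x + y) := by ext i j; simp [sc]

@[simp] lemma sc_one : (sc (1 : S)) = 1 := by
  ext i j
  have : i = j := Subsingleton.elim i j
  subst this; simp [sc]

@[simp] lemma sc_zero : (sc (0 : S)) = 0 := by ext i j; simp [sc]

lemma sc_map (x : S) (f : S → S') : (sc x).map f = sc (f x) := rfl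

lemma isUnit_sc {x : S} : IsUnit (sc x) ↔ IsUnit x := by
  constructor
  · rintro hM
    rcases isUnit_iff_exists.1 hM with ⟨N, h1, h2⟩
    refine isUnit_iff_exists.2 ⟨N 0 0, ?_, ?_⟩
    · have := congrArg (fun M => M 0 0) h1
      simpa [Matrix.mul_apply, Fin.sum_univ_one] using this
    · have := congrArg (fun M => M 0 0) h2
      simpa [Matrix.mul_apply, Fin.sum_univ_one] using this
  · rintro hx
    rcases isUnit_iff_exists.1 hx with ⟨y, hxy, hyx⟩
    exact isUnit_iff_exists.2 ⟨sc y, by rw [sc_mul, hxy, sc_one], by rw [sc_mul, hyx, sc_one]⟩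

variable {m n p q : Type*} [Fintype m] [Fintype n] [DecidableEq m] [DecidableEq n]

/-- Matrix unit with entry `c` in position `(i, j)`. -/
def eMat (i : m) (j : n) (c : S) : Matrix m n S :=
  Matrix.of fun a b => if a = i ∧ b = j then c else 0

lemma eMat_map (i : m) (j : n) (c : S) (f : S →+* S') :
    (eMat i j c).map f = eMat i j (f c) := by
  ext a b
  simp only [Matrix.map_apply, eMat, Matrix.of_apply]
  split <;> simp

lemma mul_eMat (P : Matrix p m S) (i : m) (j : n) (c : S) (a : p) (b : n) :
    (P * eMat i j c) a b = if b = j then P a i * c else 0 := by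
  rw [Matrix.mul_apply]
  rw [Finset.sum_eq_single i]
  · simp only [eMat, Matrix.of_apply, true_and]
    by_cases hb : b = j <;> simp [hb]
  · intro k _ hk
    simp [eMat, hk]
  · intro hi; exact absurd (Finset.mem_univ i) hi

lemma eMat_mul (Q : Matrix n p S) (i : m) (j : n) (c : S) (a : m) (b : p) :
    (eMat i j c * Q) a b = if a = i then c * Q j b else 0 := by
  rw [Matrix.mul_apply]
  rw [Finset.sum_eq_single j]
  · simp only [eMat, Matrix.of_apply, and_true]
    by_cases ha : a = i <;> simp [ha]
  · intro k _ hk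
    simp [eMat, hk]
  · intro hj; exact absurd (Finset.mem_univ j) hj

lemma mul_eMat_mul [Fintype p] (P : Matrix q m S) (Q : Matrix n p S) (i : m) (j : n) (c : S)
    (a : q) (b : p) : (P * eMat i j c * Q) a b = P a i * c * Q j b := by
  rw [Matrix.mul_apply, Finset.sum_eq_single j]
  · rw [mul_eMat, if_pos rfl]
  · intro k _ hk
    rw [mul_eMat, if_neg hk, zero_mul]
  · intro hj; exact absurd (Finset.mem_univ j) hj

/-- Explicit inverse for an upper block triangular matrix. -/
lemma upper_blocks_inv {A : Matrix m m S} {B : Matrix m m S} {A' : Matrix n n S}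
    {B' : Matrix n n S} (C : Matrix m n S)
    (hAB : A * B = 1) (hBA : B * A = 1) (hA'B' : A' * B' = 1) (hB'A' : B' * A' = 1) :
    Matrix.fromBlocks A C 0 A' * Matrix.fromBlocks B (-(B * C * B')) 0 B' = 1 ∧
    Matrix.fromBlocks B (-(B * C * B')) 0 B' * Matrix.fromBlocks A C 0 A' = 1 := by
  constructor
  · rw [Matrix.fromBlocks_multiply]
    have h12 : A * -(B * C * B') + C * B' = 0 := by
      rw [Matrix.mul_neg, ← Matrix.mul_assoc, ← Matrix.mul_assoc, hAB, Matrix.one_mul,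
        neg_add_cancel]
    simp only [Matrix.mul_zero, Matrix.zero_mul, add_zero, zero_add, hAB, hA'B', h12]
    exact Matrix.fromBlocks_one
  · rw [Matrix.fromBlocks_multiply]
    have h12 : B * C + -(B * C * B') * A' = 0 := by
      rw [Matrix.neg_mul, Matrix.mul_assoc (B * C), hB'A', Matrix.mul_one, add_neg_cancel]
    simp only [Matrix.mul_zero, Matrix.zero_mul, add_zero, zero_add, hBA, hB'A', h12]
    exact Matrix.fromBlocks_one

/-- A block diagonal matrix that is a unit has unit diagonal blocks. -/
lemma isUnit_of_fromBlocks_diag {A : Matrix m m S} {D : Matrix n n S}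
    (h : IsUnit (Matrix.fromBlocks A 0 0 D)) : IsUnit A ∧ IsUnit D := by
  rcases isUnit_iff_exists.1 h with ⟨E, hE1, hE2⟩
  have hEblocks : E = Matrix.fromBlocks E.toBlocks₁₁ E.toBlocks₁₂ E.toBlocks₂₁ E.toBlocks₂₂ :=
    (Matrix.fromBlocks_toBlocks E).symm
  rw [hEblocks, Matrix.fromBlocks_multiply] at hE1 hE2
  rw [show (1 : Matrix (m ⊕ n) (m ⊕ n) S) = Matrix.fromBlocks 1 0 0 1 from
    Matrix.fromBlocks_one.symm] at hE1 hE2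
  have h11 := congrArg Matrix.toBlocks₁₁ hE1
  have h11' := congrArg Matrix.toBlocks₁₁ hE2
  have h22 := congrArg Matrix.toBlocks₂₂ hE1
  have h22' := congrArg Matrix.toBlocks₂₂ hE2
  simp only [Matrix.toBlocks_fromBlocks₁₁, Matrix.toBlocks_fromBlocks₂₂] at h11 h11' h22 h22'
  constructor
  · refine isUnit_iff_exists.2 ⟨E.toBlocks₁₁, ?_, ?_⟩
    · simpa using h11
    · simpa using h11'
  · refine isUnit_iff_exists.2 ⟨E.toBlocks₂₂, ?_, ?_⟩
    · simpa using h22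
    · simpa using h22'

/-- Unitriangular block matrices are units. -/
lemma isUnit_upper_uni (X : Matrix m n S) : IsUnit (Matrix.fromBlocks (1 : Matrix m m S) X 0 (1 : Matrix n n S)) := by
  refine isUnit_iff_exists.2 ⟨Matrix.fromBlocks (1 : Matrix m m S) (-X) 0 (1 : Matrix n n S), ?_, ?_⟩ <;>
    · rw [Matrix.fromBlocks_multiply]
      simp only [Matrix.mul_zero, Matrix.zero_mul, Matrix.one_mul, Matrix.mul_one, add_zero,
        zero_add, neg_add_cancel, add_neg_cancel]
      exact Matrix.fromBlocks_one

lemma isUnit_lower_uni (Y : Matrix n m S) : IsUnit (Matrix.fromBlocks (1 : Matrix m m S) 0 Y (1 : Matrix n n S)) := by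
  refine isUnit_iff_exists.2 ⟨Matrix.fromBlocks (1 : Matrix m m S) 0 (-Y) (1 : Matrix n n S), ?_, ?_⟩ <;>
    · rw [Matrix.fromBlocks_multiply]
      simp only [Matrix.mul_zero, Matrix.zero_mul, Matrix.one_mul, Matrix.mul_one, add_zero,
        zero_add, neg_add_cancel, add_neg_cancel]
      exact Matrix.fromBlocks_one

end Blocks

section Bord
variable {S : Type*} [Ring S] {S' : Type*} [Ring S']
variable {m : Type*} [Fintype m] [DecidableEq m]

lemma upper_uni_mul (X Y : Matrix m (Fin 1) S) :
    Matrix.fromBlocks (1 : Matrix m m S) X 0 (1 : Matrix (Fin 1) (Fin 1) S) *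
      Matrix.fromBlocks 1 Y 0 1 = Matrix.fromBlocks 1 (X + Y) 0 1 := by
  rw [Matrix.fromBlocks_multiply]
  simp [add_comm]

lemma lower_uni_mul (X Y : Matrix (Fin 1) m S) :
    Matrix.fromBlocks (1 : Matrix m m S) 0 X (1 : Matrix (Fin 1) (Fin 1) S) *
      Matrix.fromBlocks 1 0 Y 1 = Matrix.fromBlocks 1 0 (X + Y) 1 := by
  rw [Matrix.fromBlocks_multiply]
  simp [add_comm]

/-- Column border: `-e_i`. -/
def colE (i : m) : Matrix m (Fin 1) S := eMat i (0 : Fin 1) (-1 : S)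

/-- Row border: `e_j^T`. -/
def rowE (j : m) : Matrix (Fin 1) m S := eMat (0 : Fin 1) j (1 : S)

lemma colE_map (i : m) (f : S →+* S') : (colE i).map f = colE i := by
  unfold colE; rw [eMat_map]; simp

lemma rowE_map (j : m) (f : S →+* S') : (rowE j).map f = rowE j := by
  unfold rowE; rw [eMat_map]; simp

/-- The bordered matrix `[[A, -e_i], [e_j^T, 0]]`. -/
def bord (A : Matrix m m S) (i j : m) : Matrix (m ⊕ Fin 1) (m ⊕ Fin 1) S :=
  Matrix.fromBlocks A (colE i) (rowE j) 0

lemma bord_map (A : Matrix m m S) (i j : m) (f : S →+* S') :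
    (bord A i j).map f = bord (A.map f) i j := by
  unfold bord
  rw [Matrix.fromBlocks_map, colE_map, rowE_map]
  simp [Matrix.map_zero]

variable {A B : Matrix m m S} (hAB : A * B = 1) (hBA : B * A = 1) (i j : m)

lemma rowE_mul_mul_colE : rowE (S := S) j * ((B * (colE i : Matrix m (Fin 1) S)) : Matrix m (Fin 1) S) = sc (-(B j i)) := by
  ext a b
  unfold rowE colE
  rw [eMat_mul]
  have ha : a = 0 := Subsingleton.elim a 0
  rw [if_pos ha, mul_eMat]
  have hb : b = 0 := Subsingleton.elim b 0
  rw [if_pos hb]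
  simp [sc]

include hAB hBA in
/-- Factorization of the bordered matrix. -/
lemma bord_factor :
    bord A i j =
      Matrix.fromBlocks 1 0 ((rowE j : Matrix (Fin 1) m S) * B) 1 *
        (Matrix.fromBlocks A 0 0 (sc (B j i)) *
          Matrix.fromBlocks 1 (B * (colE i : Matrix m (Fin 1) S)) 0 1) := by
  have e2 : A * ((B * (colE i : Matrix m (Fin 1) S)) : Matrix m (Fin 1) S) = colE i := by rw [← Matrix.mul_assoc, hAB, Matrix.one_mul]
  rw [Matrix.fromBlocks_multiply, Matrix.fromBlocks_multiply]
  simp only [Matrix.mul_zero, Matrix.zero_mul, Matrix.one_mul, Matrix.mul_one, add_zero, zero_add]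
  rw [e2, Matrix.mul_assoc (rowE j) B A, hBA, Matrix.mul_one,
    Matrix.mul_assoc (rowE j) B (colE i), rowE_mul_mul_colE i j, sc_add, neg_add_cancel, sc_zero]
  rfl

include hAB hBA in
lemma isUnit_bord_iff : IsUnit (bord A i j) ↔ IsUnit (B j i) := by
  rw [bord_factor hAB hBA i j]
  rw [← Matrix.mul_assoc]
  rcases isUnit_lower_uni (S := S) (m := m) (n := Fin 1) ((rowE j : Matrix (Fin 1) m S) * B) with ⟨uL, huL⟩
  rcases isUnit_upper_uni (S := S) (m := m) (n := Fin 1) (B * (colE i : Matrix m (Fin 1) S)) with ⟨uU, huU⟩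
  rw [← huL, ← huU, Matrix.mul_assoc]
  rw [Units.isUnit_units_mul, Units.isUnit_mul_units]
  constructor
  · intro hMid
    exact isUnit_sc.1 (isUnit_of_fromBlocks_diag hMid).2
  · intro hx
    rcases isUnit_iff_exists.1 hx with ⟨y, h1, h2⟩
    refine isUnit_iff_exists.2 ⟨Matrix.fromBlocks B 0 0 (sc y), ?_, ?_⟩
    · rw [Matrix.fromBlocks_multiply]
      simp only [Matrix.mul_zero, Matrix.zero_mul, add_zero, zero_add, hAB, sc_mul, h1, sc_one]
      exact Matrix.fromBlocks_one
    · rw [Matrix.fromBlocks_multiply]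
      simp only [Matrix.mul_zero, Matrix.zero_mul, add_zero, zero_add, hBA, sc_mul, h2, sc_one]
      exact Matrix.fromBlocks_one

include hAB hBA in
/-- Explicit inverse of the bordered matrix, with its corner entry. -/
lemma bord_inv {y : S} (h1 : B j i * y = 1) (h2 : y * B j i = 1) :
    ∃ N : Matrix (m ⊕ Fin 1) (m ⊕ Fin 1) S,
      bord A i j * N = 1 ∧ N * bord A i j = 1 ∧ N (Sum.inr 0) (Sum.inr 0) = y := by
  classical
  set L := Matrix.fromBlocks (1 : Matrix m m S) 0 ((rowE j : Matrix (Fin 1) m S) * B) (1 : Matrix (Fin 1) (Fin 1) S) with hL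
  set U := Matrix.fromBlocks (1 : Matrix m m S) (B * (colE i : Matrix m (Fin 1) S)) 0 (1 : Matrix (Fin 1) (Fin 1) S) with hU
  set Mid := Matrix.fromBlocks A 0 0 (sc (B j i)) with hMid
  set L' := Matrix.fromBlocks (1 : Matrix m m S) 0 (-((rowE j : Matrix (Fin 1) m S) * B)) (1 : Matrix (Fin 1) (Fin 1) S) with hL'
  set U' := Matrix.fromBlocks (1 : Matrix m m S) (-(B * (colE i : Matrix m (Fin 1) S))) 0 (1 : Matrix (Fin 1) (Fin 1) S) with hU'
  set Mid' := Matrix.fromBlocks B 0 0 (sc y) with hMid'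
  have hLL' : L * L' = 1 := by
    rw [hL, hL', lower_uni_mul]
    simp [← Matrix.fromBlocks_one]
  have hL'L : L' * L = 1 := by
    rw [hL, hL', lower_uni_mul]
    simp [← Matrix.fromBlocks_one]
  have hUU' : U * U' = 1 := by
    rw [hU, hU', upper_uni_mul]
    simp [← Matrix.fromBlocks_one]
  have hU'U : U' * U = 1 := by
    rw [hU, hU', upper_uni_mul]
    simp [← Matrix.fromBlocks_one]
  have hMM' : Mid * Mid' = 1 := by
    rw [hMid, hMid', Matrix.fromBlocks_multiply]
    simp only [Matrix.mul_zero, Matrix.zero_mul, add_zero, zero_add, hAB, sc_mul, h1, sc_one]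
    exact Matrix.fromBlocks_one
  have hM'M : Mid' * Mid = 1 := by
    rw [hMid, hMid', Matrix.fromBlocks_multiply]
    simp only [Matrix.mul_zero, Matrix.zero_mul, add_zero, zero_add, hBA, sc_mul, h2, sc_one]
    exact Matrix.fromBlocks_one
  have hfac : bord A i j = L * (Mid * U) := bord_factor hAB hBA i j
  refine ⟨U' * Mid' * L', ?_, ?_, ?_⟩
  · rw [hfac]
    calc L * (Mid * U) * (U' * Mid' * L')
        = L * (Mid * ((U * U') * Mid') * L') := by simp only [Matrix.mul_assoc]
      _ = 1 := by rw [hUU', Matrix.one_mul, hMM', Matrix.one_mul, hLL']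
  · rw [hfac]
    calc U' * Mid' * L' * (L * (Mid * U))
        = U' * (Mid' * ((L' * L) * Mid) * U) := by simp only [Matrix.mul_assoc]
      _ = 1 := by rw [hL'L, Matrix.one_mul, hM'M, Matrix.one_mul, hU'U]
  · rw [hU', hMid', hL', Matrix.fromBlocks_multiply, Matrix.fromBlocks_multiply]
    rw [Matrix.fromBlocks_apply₂₂]
    simp [sc]

end Bord

section Pair
variable {Γ : Type u} [Group Γ] [DecidableEq Γ] {R : Type v} [Ring R]
variable (𝒜 : Γ → AddSubgroup R) (d₁ d₂ : GrDivRingHom Γ R 𝒜)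

/-- The pair `(x₁, x₂)` arises in degree `γ` as matching entries of inverses of the
image of a single homogeneous matrix over `R`. -/
def Pair (γ : Γ) (x₁ : d₁.K) (x₂ : d₂.K) : Prop :=
  ∃ (n : ℕ) (A : Matrix (Fin n) (Fin n) R) (α β : Fin n → Γ) (i j : Fin n)
    (B₁ : Matrix (Fin n) (Fin n) d₁.K) (B₂ : Matrix (Fin n) (Fin n) d₂.K),
    IsHomog 𝒜 A α β ∧ β j * (α i)⁻¹ = γ ∧
    A.map ⇑d₁.φ * B₁ = 1 ∧ B₁ * A.map ⇑d₁.φ = 1 ∧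
    A.map ⇑d₂.φ * B₂ = 1 ∧ B₂ * A.map ⇑d₂.φ = 1 ∧
    B₁ j i = x₁ ∧ B₂ j i = x₂

variable {𝒜 d₁ d₂}

lemma isUnit_of_submatrix_equiv {S : Type*} [Ring S] {ι κ : Type*}
    [Fintype ι] [DecidableEq ι] [Fintype κ] [DecidableEq κ] (e : ι ≃ κ)
    (M : Matrix κ κ S) (h : IsUnit (M.submatrix ⇑e ⇑e)) : IsUnit M := by
  rcases isUnit_iff_exists.1 h with ⟨N, h1, h2⟩
  have hM : M = (M.submatrix ⇑e ⇑e).submatrix ⇑e.symm ⇑e.symm := by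
    simp [Matrix.submatrix_submatrix]
  refine isUnit_iff_exists.2 ⟨N.submatrix ⇑e.symm ⇑e.symm, ?_, ?_⟩
  · conv_lhs => rw [hM]
    rw [Matrix.submatrix_mul_equiv _ _ _ e.symm _, h1, Matrix.submatrix_one_equiv]
  · conv_lhs => rw [hM]
    rw [Matrix.submatrix_mul_equiv _ _ _ e.symm _, h2, Matrix.submatrix_one_equiv]

lemma isUnit_submatrix_equiv {S : Type*} [Ring S] {ι κ : Type*}
    [Fintype ι] [DecidableEq ι] [Fintype κ] [DecidableEq κ] (e : ι ≃ κ)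
    (M : Matrix κ κ S) : IsUnit (M.submatrix ⇑e ⇑e) ↔ IsUnit M := by
  constructor
  · exact isUnit_of_submatrix_equiv e M
  · intro h
    refine isUnit_of_submatrix_equiv e.symm (M.submatrix ⇑e ⇑e) ?_
    have : (M.submatrix ⇑e ⇑e).submatrix ⇑e.symm ⇑e.symm = M := by
      simp [Matrix.submatrix_submatrix]
    rwa [this]

lemma pair_bridge {ι : Type} [Fintype ι] [DecidableEq ι] {nn : ℕ} (e : ι ≃ Fin nn)
    (M : Matrix ι ι R) (α β : ι → Γ) (hM : ∀ a b, M a b ∈ 𝒜 (α a * (β b)⁻¹))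
    (B₁ : Matrix ι ι d₁.K) (B₂ : Matrix ι ι d₂.K)
    (h11 : M.map ⇑d₁.φ * B₁ = 1) (h12 : B₁ * M.map ⇑d₁.φ = 1)
    (h21 : M.map ⇑d₂.φ * B₂ = 1) (h22 : B₂ * M.map ⇑d₂.φ = 1)
    (i j : ι) : Pair 𝒜 d₁ d₂ (β j * (α i)⁻¹) (B₁ j i) (B₂ j i) := by
  refine ⟨nn, M.submatrix ⇑e.symm ⇑e.symm, α ∘ ⇑e.symm, β ∘ ⇑e.symm, e i, e j,
    B₁.submatrix ⇑e.symm ⇑e.symm, B₂.submatrix ⇑e.symm ⇑e.symm, ?_, ?_, ?_, ?_, ?_, ?_, ?_, ?_⟩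
  · intro a b
    exact hM _ _
  · simp
  · rw [show (M.submatrix ⇑e.symm ⇑e.symm).map ⇑d₁.φ
      = (M.map ⇑d₁.φ).submatrix ⇑e.symm ⇑e.symm from rfl,
      Matrix.submatrix_mul_equiv _ _ _ e.symm _, h11, Matrix.submatrix_one_equiv]
  · rw [show (M.submatrix ⇑e.symm ⇑e.symm).map ⇑d₁.φ
      = (M.map ⇑d₁.φ).submatrix ⇑e.symm ⇑e.symm from rfl,
      Matrix.submatrix_mul_equiv _ _ _ e.symm _, h12, Matrix.submatrix_one_equiv]
  · rw [show (M.submatrix ⇑e.symm ⇑e.symm).map ⇑d₂.φ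
      = (M.map ⇑d₂.φ).submatrix ⇑e.symm ⇑e.symm from rfl,
      Matrix.submatrix_mul_equiv _ _ _ e.symm _, h21, Matrix.submatrix_one_equiv]
  · rw [show (M.submatrix ⇑e.symm ⇑e.symm).map ⇑d₂.φ
      = (M.map ⇑d₂.φ).submatrix ⇑e.symm ⇑e.symm from rfl,
      Matrix.submatrix_mul_equiv _ _ _ e.symm _, h22, Matrix.submatrix_one_equiv]
  · simp [Matrix.submatrix_apply]
  · simp [Matrix.submatrix_apply]

/-- Matching entries of inverses are homogeneous. -/
lemma pair_mem {γ : Γ} {x₁ : d₁.K} {x₂ : d₂.K} (hp : Pair 𝒜 d₁ d₂ γ x₁ x₂) :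
    x₁ ∈ d₁.grading γ ∧ x₂ ∈ d₂.grading γ := by
  obtain ⟨n, A, α, β, i, j, B₁, B₂, hA, hdeg, h11, h12, h21, h22, hx1, hx2⟩ := hp
  subst hdeg hx1 hx2
  constructor
  · exact inv_homog d₁.grading d₁.internal d₁.one_mem (fun hx hy => d₁.mul_mem hx hy)
      (fun a b => d₁.map_mem (hA a b)) h11 h12 j i
  · exact inv_homog d₂.grading d₂.internal d₂.one_mem (fun hx hy => d₂.mul_mem hx hy)
      (fun a b => d₂.map_mem (hA a b)) h21 h22 j i

lemma pair_scalar (hone : (1 : R) ∈ 𝒜 1) {γ : Γ} {r : R} (hr : r ∈ 𝒜 γ) :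
    Pair 𝒜 d₁ d₂ γ (d₁.φ r) (d₂.φ r) := by
  classical
  set M : Matrix (Fin 1 ⊕ Fin 1) (Fin 1 ⊕ Fin 1) R :=
    Matrix.fromBlocks 1 (sc (-r)) 0 1 with hMdef
  have hmap : ∀ {K : Type (max u v)} [Ring K] (f : R →+* K),
      M.map ⇑f = Matrix.fromBlocks 1 (sc (-(f r))) 0 1 := by
    intro K _ f
    rw [hMdef, Matrix.fromBlocks_map, sc_map, Matrix.map_one _ (map_zero f) (map_one f),
      Matrix.map_zero _ (map_zero f), map_neg]
  have hinv : ∀ {K : Type (max u v)} [Ring K] (f : R →+* K),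
      M.map ⇑f * Matrix.fromBlocks 1 (sc (f r)) 0 1 = 1 ∧
      Matrix.fromBlocks 1 (sc (f r)) 0 1 * M.map ⇑f = 1 := by
    intro K _ f
    constructor
    · rw [hmap, upper_uni_mul, sc_add, neg_add_cancel, sc_zero]
      exact Matrix.fromBlocks_one
    · rw [hmap, upper_uni_mul, sc_add, add_neg_cancel, sc_zero]
      exact Matrix.fromBlocks_one
  have hhom : ∀ a b, M a b ∈
      𝒜 ((Sum.elim (fun _ => γ) (fun _ => (1:Γ)) a) *
        ((Sum.elim (fun _ => γ) (fun _ => (1:Γ)) b))⁻¹) := by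
    rintro (a | a) (b | b)
    · have hab : a = b := Subsingleton.elim a b
      subst hab
      simpa [hMdef, Matrix.one_apply] using hone
    · simpa [hMdef] using (𝒜 γ).neg_mem hr
    · have hz : M (Sum.inr a) (Sum.inl b) = 0 := by simp [hMdef]
      rw [hz]
      exact (𝒜 _).zero_mem
    · have hab : a = b := Subsingleton.elim a b
      subst hab
      simpa [hMdef, Matrix.one_apply] using hone
  have hb := pair_bridge (finSumFinEquiv (m := 1) (n := 1)) M
    (Sum.elim (fun _ => γ) (fun _ => (1:Γ))) (Sum.elim (fun _ => γ) (fun _ => (1:Γ))) hhom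
    (Matrix.fromBlocks 1 (sc (d₁.φ r)) 0 1) (Matrix.fromBlocks 1 (sc (d₂.φ r)) 0 1)
    (hinv d₁.φ).1 (hinv d₁.φ).2 (hinv d₂.φ).1 (hinv d₂.φ).2 (Sum.inr 0) (Sum.inl 0)
  simpa using hb

lemma pair_neg {γ : Γ} {x₁ : d₁.K} {x₂ : d₂.K} (hp : Pair 𝒜 d₁ d₂ γ x₁ x₂) :
    Pair 𝒜 d₁ d₂ γ (-x₁) (-x₂) := by
  classical
  obtain ⟨n, A, α, β, i, j, B₁, B₂, hA, hdeg, h11, h12, h21, h22, hx1, hx2⟩ := hp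
  set sg : Fin n → R := fun k => if k = i then (-1 : R) else 1 with hsg
  set D : Matrix (Fin n) (Fin n) R := Matrix.diagonal sg with hD
  have hDD : ∀ {K : Type (max u v)} [Ring K] (f : R →+* K),
      D.map ⇑f = Matrix.diagonal fun k => if k = i then (-1 : K) else 1 := by
    intro K _ f
    rw [hD]
    ext a b
    rw [Matrix.map_apply, Matrix.diagonal_apply, Matrix.diagonal_apply]
    by_cases hab : a = b
    · subst hab
      simp only [if_pos rfl, hsg]
      by_cases hk : a = i <;> simp [hk]
    · simp [hab]
  have hDsq : ∀ {K : Type (max u v)} [Ring K] (f : R →+* K),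
      D.map ⇑f * D.map ⇑f = 1 := by
    intro K _ f
    rw [hDD, Matrix.diagonal_mul_diagonal]
    rw [show (fun k => (if k = i then (-1:K) else 1) * (if k = i then (-1:K) else 1))
        = fun _ => (1:K) by funext k; by_cases hk : k = i <;> simp [hk]]
    exact Matrix.diagonal_one
  have key : ∀ {K : Type (max u v)} [Ring K] (f : R →+* K) (B : Matrix (Fin n) (Fin n) K),
      A.map ⇑f * B = 1 → B * A.map ⇑f = 1 →
      ((D * A).map ⇑f * (B * D.map ⇑f) = 1 ∧ (B * D.map ⇑f) * (D * A).map ⇑f = 1 ∧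
        (B * D.map ⇑f) j i = -(B j i)) := by
    intro K _ f B hfB hBf
    have hDA : (D * A).map ⇑f = D.map ⇑f * A.map ⇑f := Matrix.map_mul
    refine ⟨?_, ?_, ?_⟩
    · rw [hDA]
      calc D.map ⇑f * A.map ⇑f * (B * D.map ⇑f)
          = D.map ⇑f * (A.map ⇑f * B) * D.map ⇑f := by simp only [Matrix.mul_assoc]
        _ = 1 := by rw [hfB, Matrix.mul_one, hDsq f]
    · rw [hDA]
      calc B * D.map ⇑f * (D.map ⇑f * A.map ⇑f)
          = B * (D.map ⇑f * D.map ⇑f) * A.map ⇑f := by simp only [Matrix.mul_assoc]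
        _ = 1 := by rw [hDsq f, Matrix.mul_one, hBf]
    · rw [hDD, Matrix.mul_diagonal]
      simp
  have hhom : IsHomog 𝒜 (D * A) α β := by
    intro a b
    rw [hD, Matrix.diagonal_mul]
    by_cases hk : a = i
    · simp only [hsg, if_pos hk, neg_one_mul]
      exact (𝒜 _).neg_mem (hA a b)
    · simp only [hsg, if_neg hk, one_mul]
      exact hA a b
  obtain ⟨k1, k2, k3⟩ := key d₁.φ B₁ h11 h12
  obtain ⟨l1, l2, l3⟩ := key d₂.φ B₂ h21 h22
  exact ⟨n, D * A, α, β, i, j, B₁ * D.map ⇑d₁.φ, B₂ * D.map ⇑d₂.φ, hhom, hdeg,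
    k1, k2, l1, l2, by rw [k3, hx1], by rw [l3, hx2]⟩

lemma pair_mul (hone : (1 : R) ∈ 𝒜 1) {γ δ : Γ} {x₁ y₁ : d₁.K} {x₂ y₂ : d₂.K}
    (hx : Pair 𝒜 d₁ d₂ γ x₁ x₂) (hy : Pair 𝒜 d₁ d₂ δ y₁ y₂) :
    Pair 𝒜 d₁ d₂ (γ * δ) (x₁ * y₁) (x₂ * y₂) := by
  classical
  obtain ⟨n, A, α, β, i, j, B₁, B₂, hA, hdeg, h11, h12, h21, h22, hx1, hx2⟩ := hx
  obtain ⟨n', A', α', β', i', j', B₁', B₂', hA', hdeg', k11, k12, k21, k22, hy1, hy2⟩ := hy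
  set g : Γ := (β' j')⁻¹ * α i with hg
  set C : Matrix (Fin n) (Fin n') R := eMat i j' (-1 : R) with hC
  set M : Matrix (Fin n ⊕ Fin n') (Fin n ⊕ Fin n') R := Matrix.fromBlocks A C 0 A' with hM
  have hCf : ∀ {K : Type (max u v)} [Ring K] (f : R →+* K), C.map ⇑f = eMat i j' (-1 : K) := by
    intro K _ f
    rw [hC, eMat_map]
    simp
  have hMf : ∀ {K : Type (max u v)} [Ring K] (f : R →+* K),
      M.map ⇑f = Matrix.fromBlocks (A.map ⇑f) (C.map ⇑f) 0 (A'.map ⇑f) := by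
    intro K _ f
    rw [hM, Matrix.fromBlocks_map, Matrix.map_zero _ (map_zero f)]
  have hhom : ∀ a b, M a b ∈
      𝒜 ((Sum.elim α (fun k => α' k * g) a) * ((Sum.elim β (fun l => β' l * g) b))⁻¹) := by
    rintro (a | a) (b | b)
    · simpa [hM] using hA a b
    · simp only [hM, Matrix.fromBlocks_apply₁₂, Sum.elim_inl, Sum.elim_inr, hC, eMat,
        Matrix.of_apply]
      by_cases hab : a = i ∧ b = j'
      · rw [if_pos hab]
        obtain ⟨ha, hb⟩ := hab
        subst ha hb
        have he : α a * (β' b * g)⁻¹ = 1 := by rw [hg]; group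
        rw [he]
        exact (𝒜 1).neg_mem hone
      · rw [if_neg hab]
        exact (𝒜 _).zero_mem
    · have hz : M (Sum.inr a) (Sum.inl b) = 0 := by simp [hM]
      rw [hz]
      exact (𝒜 _).zero_mem
    · simp only [hM, Matrix.fromBlocks_apply₂₂, Sum.elim_inr]
      have he : α' a * g * (β' b * g)⁻¹ = α' a * (β' b)⁻¹ := by group
      rw [he]
      exact hA' a b
  have key : ∀ {K : Type (max u v)} [Ring K] (f : R →+* K) (B : Matrix (Fin n) (Fin n) K)
      (B' : Matrix (Fin n') (Fin n') K),
      A.map ⇑f * B = 1 → B * A.map ⇑f = 1 → A'.map ⇑f * B' = 1 → B' * A'.map ⇑f = 1 →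
      (M.map ⇑f * Matrix.fromBlocks B (-(B * C.map ⇑f * B')) 0 B' = 1 ∧
       Matrix.fromBlocks B (-(B * C.map ⇑f * B')) 0 B' * M.map ⇑f = 1 ∧
       Matrix.fromBlocks B (-(B * C.map ⇑f * B')) 0 B' (Sum.inl j) (Sum.inr i')
         = B j i * B' j' i') := by
    intro K _ f B B' hfB hBf hfB' hB'f
    rw [hMf f]
    obtain ⟨e1, e2⟩ := upper_blocks_inv (C.map ⇑f) hfB hBf hfB' hB'f
    refine ⟨e1, e2, ?_⟩
    rw [Matrix.fromBlocks_apply₁₂, Matrix.neg_apply, hCf f, mul_eMat_mul]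
    simp
  obtain ⟨e1, e2, e3⟩ := key d₁.φ B₁ B₁' h11 h12 k11 k12
  obtain ⟨f1, f2, f3⟩ := key d₂.φ B₂ B₂' h21 h22 k21 k22
  have hb := pair_bridge (finSumFinEquiv (m := n) (n := n')) M
    (Sum.elim α fun k => α' k * g) (Sum.elim β fun l => β' l * g) hhom
    _ _ e1 e2 f1 f2 (Sum.inr i') (Sum.inl j)
  rw [e3, f3, hx1, hx2, hy1, hy2] at hb
  have hd : (Sum.elim β fun l => β' l * g) (Sum.inl j) *
      ((Sum.elim α fun k => α' k * g) (Sum.inr i'))⁻¹ = γ * δ := by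
    rw [← hdeg, ← hdeg']
    simp only [Sum.elim_inl, Sum.elim_inr, hg]
    group
  rwa [hd] at hb

lemma pair_add {γ : Γ} {x₁ y₁ : d₁.K} {x₂ y₂ : d₂.K}
    (hx : Pair 𝒜 d₁ d₂ γ x₁ x₂) (hy : Pair 𝒜 d₁ d₂ γ y₁ y₂) :
    Pair 𝒜 d₁ d₂ γ (x₁ + y₁) (x₂ + y₂) := by
  classical
  obtain ⟨n, A, α, β, i, j, B₁, B₂, hA, hdeg, h11, h12, h21, h22, hx1, hx2⟩ := hx
  obtain ⟨n', A', α', β', i', j', B₁', B₂', hA', hdeg', k11, k12, k21, k22, hy1, hy2⟩ := hy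
  set g : Γ := (β' j')⁻¹ * β j with hg
  have hαi : γ⁻¹ * β j = α i := by rw [← hdeg]; group
  have hαi' : γ⁻¹ * β' j' = α' i' := by rw [← hdeg']; group
  set C : Matrix (Fin n) (Fin n') R :=
    -(A * eMat j j' (1 : R) + eMat i i' (1 : R) * A') with hC
  set M : Matrix (Fin n ⊕ Fin n') (Fin n ⊕ Fin n') R := Matrix.fromBlocks A C 0 A' with hM
  have hCf : ∀ {K : Type (max u v)} [Ring K] (f : R →+* K),
      C.map ⇑f = -(A.map ⇑f * eMat j j' (1 : K) + eMat i i' (1 : K) * A'.map ⇑f) := by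
    intro K _ f
    ext a b
    simp [hC, Matrix.map_apply, Matrix.neg_apply, Matrix.add_apply, mul_eMat, eMat_mul,
      apply_ite (⇑f), _root_.map_mul]
  have hMf : ∀ {K : Type (max u v)} [Ring K] (f : R →+* K),
      M.map ⇑f = Matrix.fromBlocks (A.map ⇑f) (C.map ⇑f) 0 (A'.map ⇑f) := by
    intro K _ f
    rw [hM, Matrix.fromBlocks_map, Matrix.map_zero _ (map_zero f)]
  have hhom : ∀ a b, M a b ∈
      𝒜 ((Sum.elim α (fun k => α' k * g) a) * ((Sum.elim β (fun l => β' l * g) b))⁻¹) := by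
    rintro (a | a) (b | b)
    · simpa [hM] using hA a b
    · simp only [hM, Matrix.fromBlocks_apply₁₂, Sum.elim_inl, Sum.elim_inr, hC,
        Matrix.neg_apply, Matrix.add_apply, mul_eMat, eMat_mul]
      refine (𝒜 _).neg_mem ((𝒜 _).add_mem ?_ ?_)
      · by_cases hb : b = j'
        · subst hb
          have he : α a * (β' b * g)⁻¹ = α a * (β j)⁻¹ := by rw [hg]; group
          rw [if_pos rfl, he, mul_one]
          exact hA a j
        · rw [if_neg hb]
          exact (𝒜 _).zero_mem
      · by_cases ha : a = i
        · subst ha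
          have he : α a * (β' b * g)⁻¹ = α' i' * (β' b)⁻¹ := by
            rw [← hαi, ← hαi', hg]; group
          rw [if_pos rfl, he, one_mul]
          exact hA' i' b
        · rw [if_neg ha]
          exact (𝒜 _).zero_mem
    · have hz : M (Sum.inr a) (Sum.inl b) = 0 := by simp [hM]
      rw [hz]
      exact (𝒜 _).zero_mem
    · simp only [hM, Matrix.fromBlocks_apply₂₂, Sum.elim_inr]
      have he : α' a * g * (β' b * g)⁻¹ = α' a * (β' b)⁻¹ := by group
      rw [he]
      exact hA' a b
  have key : ∀ {K : Type (max u v)} [Ring K] (f : R →+* K) (B : Matrix (Fin n) (Fin n) K)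
      (B' : Matrix (Fin n') (Fin n') K),
      A.map ⇑f * B = 1 → B * A.map ⇑f = 1 → A'.map ⇑f * B' = 1 → B' * A'.map ⇑f = 1 →
      (M.map ⇑f * Matrix.fromBlocks B (-(B * C.map ⇑f * B')) 0 B' = 1 ∧
       Matrix.fromBlocks B (-(B * C.map ⇑f * B')) 0 B' * M.map ⇑f = 1 ∧
       Matrix.fromBlocks B (-(B * C.map ⇑f * B')) 0 B' (Sum.inl j) (Sum.inr i')
         = B' j' i' + B j i) := by
    intro K _ f B B' hfB hBf hfB' hB'f
    rw [hMf f]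
    obtain ⟨e1, e2⟩ := upper_blocks_inv (C.map ⇑f) hfB hBf hfB' hB'f
    refine ⟨e1, e2, ?_⟩
    rw [Matrix.fromBlocks_apply₁₂, Matrix.neg_apply, hCf f]
    have hT : B * -(A.map ⇑f * eMat j j' (1 : K) + eMat i i' (1 : K) * A'.map ⇑f) * B'
        = -(eMat j j' (1 : K) * B' + B * eMat i i' (1 : K)) := by
      rw [Matrix.mul_neg, Matrix.neg_mul, Matrix.mul_add, Matrix.add_mul]
      congr 1
      congr 1
      · rw [← Matrix.mul_assoc, hBf, Matrix.one_mul]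
      · rw [← Matrix.mul_assoc, Matrix.mul_assoc (B * eMat i i' 1), hfB', Matrix.mul_one]
    rw [hT, Matrix.neg_apply, neg_neg, Matrix.add_apply, eMat_mul, mul_eMat,
      if_pos rfl, if_pos rfl, one_mul, mul_one]
  obtain ⟨e1, e2, e3⟩ := key d₁.φ B₁ B₁' h11 h12 k11 k12
  obtain ⟨f1, f2, f3⟩ := key d₂.φ B₂ B₂' h21 h22 k21 k22
  have hb := pair_bridge (finSumFinEquiv (m := n) (n := n')) M
    (Sum.elim α fun k => α' k * g) (Sum.elim β fun l => β' l * g) hhom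
    _ _ e1 e2 f1 f2 (Sum.inr i') (Sum.inl j)
  rw [e3, f3, hx1, hx2, hy1, hy2] at hb
  have hd : (Sum.elim β fun l => β' l * g) (Sum.inl j) *
      ((Sum.elim α fun k => α' k * g) (Sum.inr i'))⁻¹ = γ := by
    rw [← hdeg']
    simp only [Sum.elim_inl, Sum.elim_inr, hg]
    group
  rw [hd] at hb
  rw [add_comm x₁ y₁, add_comm x₂ y₂]
  exact hb

lemma pair_sum {γ : Γ} {ι : Type*} (s : Finset ι) (f₁ : ι → d₁.K) (f₂ : ι → d₂.K)
    (hone : (1 : R) ∈ 𝒜 1)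
    (h : ∀ i ∈ s, Pair 𝒜 d₁ d₂ γ (f₁ i) (f₂ i)) :
    Pair 𝒜 d₁ d₂ γ (∑ i ∈ s, f₁ i) (∑ i ∈ s, f₂ i) := by
  classical
  induction s using Finset.induction_on with
  | empty =>
    simpa using pair_scalar (d₁ := d₁) (d₂ := d₂) hone ((𝒜 γ).zero_mem)
  | insert a s hx ih =>
    rw [Finset.sum_insert hx, Finset.sum_insert hx]
    exact pair_add (h a (Finset.mem_insert_self a s))
      (ih fun i hi => h i (Finset.mem_insert_of_mem hi))

lemma bord_homog_gr (hone : (1 : R) ∈ 𝒜 1) {n : ℕ} {A : Matrix (Fin n) (Fin n) R}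
    {α β : Fin n → Γ} (hA : IsHomog 𝒜 A α β) (i j : Fin n) :
    ∀ a b, bord A i j a b ∈
      𝒜 ((Sum.elim α (fun _ => β j) a) * ((Sum.elim β (fun _ => α i) b))⁻¹) := by
  rintro (a | a) (b | b)
  · simpa [bord] using hA a b
  · simp only [bord, Matrix.fromBlocks_apply₁₂, Sum.elim_inl, Sum.elim_inr, colE, eMat,
      Matrix.of_apply]
    by_cases hab : a = i ∧ b = 0
    · rw [if_pos hab, hab.1]
      have he : α i * (α i)⁻¹ = 1 := by group
      rw [he]
      exact (𝒜 1).neg_mem hone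
    · rw [if_neg hab]
      exact (𝒜 _).zero_mem
  · simp only [bord, Matrix.fromBlocks_apply₂₁, Sum.elim_inl, Sum.elim_inr, rowE, eMat,
      Matrix.of_apply]
    by_cases hab : a = 0 ∧ b = j
    · rw [if_pos hab, hab.2]
      have he : β j * (β j)⁻¹ = 1 := by group
      rw [he]
      exact hone
    · rw [if_neg hab]
      exact (𝒜 _).zero_mem
  · have hz : bord A i j (Sum.inr a) (Sum.inr b) = 0 := by simp [bord]
    rw [hz]
    exact (𝒜 _).zero_mem

variable (hEq : {p : SqMat R | IsHomogSq 𝒜 p.2 ∧ IsUnit ((p.2).map ⇑d₁.φ)} =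
    {p : SqMat R | IsHomogSq 𝒜 p.2 ∧ IsUnit ((p.2).map ⇑d₂.φ)})

include hEq in
lemma pair_isUnit_iff (hone : (1 : R) ∈ 𝒜 1) {γ : Γ} {x₁ : d₁.K} {x₂ : d₂.K}
    (hp : Pair 𝒜 d₁ d₂ γ x₁ x₂) : IsUnit x₁ ↔ IsUnit x₂ := by
  classical
  obtain ⟨n, A, α, β, i, j, B₁, B₂, hA, hdeg, h11, h12, h21, h22, hx1, hx2⟩ := hp
  set e : Fin (n + 1) ≃ (Fin n ⊕ Fin 1) := (finSumFinEquiv (m := n) (n := 1)).symm with he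
  set Ab : Matrix (Fin (n + 1)) (Fin (n + 1)) R := (bord A i j).submatrix ⇑e ⇑e with hAb
  have hmapAb : ∀ {K : Type (max u v)} [Ring K] (f : R →+* K),
      Ab.map ⇑f = (bord (A.map ⇑f) i j).submatrix ⇑e ⇑e := by
    intro K _ f
    rw [show Ab.map ⇑f = ((bord A i j).map ⇑f).submatrix ⇑e ⇑e from rfl, bord_map]
  have hhomog : IsHomogSq 𝒜 Ab :=
    ⟨Sum.elim α (fun _ => β j) ∘ ⇑e, Sum.elim β (fun _ => α i) ∘ ⇑e,
      fun a b => bord_homog_gr hone hA i j _ _⟩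
  have h1 : IsUnit (Ab.map ⇑d₁.φ) ↔ IsUnit x₁ := by
    rw [hmapAb, isUnit_submatrix_equiv, isUnit_bord_iff h11 h12 i j, hx1]
  have h2 : IsUnit (Ab.map ⇑d₂.φ) ↔ IsUnit x₂ := by
    rw [hmapAb, isUnit_submatrix_equiv, isUnit_bord_iff h21 h22 i j, hx2]
  rw [← h1, ← h2]
  constructor
  · intro hu
    have hmem : (⟨n + 1, Ab⟩ : SqMat R) ∈
        {p : SqMat R | IsHomogSq 𝒜 p.2 ∧ IsUnit ((p.2).map ⇑d₁.φ)} := ⟨hhomog, hu⟩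
    rw [hEq] at hmem
    exact hmem.2
  · intro hu
    have hmem : (⟨n + 1, Ab⟩ : SqMat R) ∈
        {p : SqMat R | IsHomogSq 𝒜 p.2 ∧ IsUnit ((p.2).map ⇑d₂.φ)} := ⟨hhomog, hu⟩
    rw [← hEq] at hmem
    exact hmem.2

include hEq in
lemma pair_zero₁ (hone : (1 : R) ∈ 𝒜 1) {γ : Γ} {x₂ : d₂.K}
    (hp : Pair 𝒜 d₁ d₂ γ 0 x₂) : x₂ = 0 := by
  by_contra h2
  have hu2 : IsUnit x₂ := d₂.isUnit_of_ne (pair_mem hp).2 h2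
  have hu1 : IsUnit (0 : d₁.K) := (pair_isUnit_iff hEq hone hp).2 hu2
  rw [isUnit_zero_iff] at hu1
  exact zero_ne_one hu1

include hEq in
lemma pair_zero₂ (hone : (1 : R) ∈ 𝒜 1) {γ : Γ} {x₁ : d₁.K}
    (hp : Pair 𝒜 d₁ d₂ γ x₁ 0) : x₁ = 0 := by
  by_contra h1
  have hu1 : IsUnit x₁ := d₁.isUnit_of_ne (pair_mem hp).1 h1
  have hu2 : IsUnit (0 : d₂.K) := (pair_isUnit_iff hEq hone hp).1 hu1
  rw [isUnit_zero_iff] at hu2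
  exact zero_ne_one hu2

include hEq in
lemma pair_inv (hone : (1 : R) ∈ 𝒜 1) {γ : Γ} {x₁ : d₁.K} {x₂ : d₂.K}
    (hp : Pair 𝒜 d₁ d₂ γ x₁ x₂) (hx : x₁ ≠ 0) :
    ∃ (y₁ : d₁.K) (y₂ : d₂.K), x₁ * y₁ = 1 ∧ y₁ * x₁ = 1 ∧ x₂ * y₂ = 1 ∧ y₂ * x₂ = 1 ∧
      Pair 𝒜 d₁ d₂ γ⁻¹ y₁ y₂ := by
  classical
  have hu1 : IsUnit x₁ := d₁.isUnit_of_ne (pair_mem hp).1 hx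
  have hu2 : IsUnit x₂ := (pair_isUnit_iff hEq hone hp).1 hu1
  obtain ⟨y₁, hy11, hy12⟩ := isUnit_iff_exists.1 hu1
  obtain ⟨y₂, hy21, hy22⟩ := isUnit_iff_exists.1 hu2
  obtain ⟨n, A, α, β, i, j, B₁, B₂, hA, hdeg, h11, h12, h21, h22, hx1, hx2⟩ := hp
  obtain ⟨N₁, m11, m12, m13⟩ := bord_inv h11 h12 i j
    (by rw [hx1]; exact hy11) (by rw [hx1]; exact hy12)
  obtain ⟨N₂, l11, l12, l13⟩ := bord_inv h21 h22 i j
    (by rw [hx2]; exact hy21) (by rw [hx2]; exact hy22)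
  have hb := pair_bridge (finSumFinEquiv (m := n) (n := 1)) (bord A i j)
    (Sum.elim α (fun _ => β j)) (Sum.elim β (fun _ => α i)) (bord_homog_gr hone hA i j)
    N₁ N₂ (by rw [bord_map]; exact m11) (by rw [bord_map]; exact m12)
    (by rw [bord_map]; exact l11) (by rw [bord_map]; exact l12)
    (Sum.inr 0) (Sum.inr 0)
  rw [m13, l13] at hb
  have hd : (Sum.elim β fun _ : Fin 1 => α i) (Sum.inr (0 : Fin 1)) *
      ((Sum.elim α fun _ : Fin 1 => β j) (Sum.inr (0 : Fin 1)))⁻¹ = γ⁻¹ := by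
    rw [← hdeg]
    simp only [Sum.elim_inr]
    group
  rw [hd] at hb
  exact ⟨y₁, y₂, hy11, hy12, hy21, hy22, hb⟩

end Pair

end GrProof




set_option maxHeartbeats 1000000 in
open GrProof in
/-- Let `(K₁, φ₁)` and `(K₂, φ₂)` be `Γ`-graded epic `R`-division
rings (epicness: the only subring of `Kᵢ` containing the image of `φᵢ` and closed
under inverses of its own nonzero homogeneous elements is `Kᵢ`).  If the sets of
square homogeneous matrices over `R` that become invertible under `φ₁` and under
`φ₂` coincide, then there is a ring isomorphism `ψ : K₁ ≃+* K₂` carrying each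
homogeneous component of `K₁` onto the corresponding component of `K₂` and
satisfying `ψ ∘ φ₁ = φ₂`. -/
theorem gr_epic_division_rings_iso_of_eq_inverting
    {Γ : Type u} [Group Γ] [DecidableEq Γ] {R : Type v} [Ring R]
    (𝒜 : Γ → AddSubgroup R)
    (hinternal : DirectSum.IsInternal 𝒜)
    (hone : (1 : R) ∈ 𝒜 1)
    (hmul : ∀ {γ δ : Γ} {x y : R}, x ∈ 𝒜 γ → y ∈ 𝒜 δ → x * y ∈ 𝒜 (γ * δ))
    (d₁ d₂ : GrDivRingHom Γ R 𝒜)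
    (hepi₁ : ∀ T : Subring d₁.K,
        Set.range ⇑d₁.φ ⊆ (T : Set d₁.K) →
        (∀ (γ : Γ) (x y : d₁.K), x ∈ d₁.grading γ → x ∈ T → x ≠ 0 →
          x * y = 1 → y * x = 1 → y ∈ T) →
        T = ⊤)
    (hepi₂ : ∀ T : Subring d₂.K,
        Set.range ⇑d₂.φ ⊆ (T : Set d₂.K) →
        (∀ (γ : Γ) (x y : d₂.K), x ∈ d₂.grading γ → x ∈ T → x ≠ 0 →
          x * y = 1 → y * x = 1 → y ∈ T) →
        T = ⊤)
    (hEq : {p : SqMat R | IsHomogSq 𝒜 p.2 ∧ IsUnit ((p.2).map ⇑d₁.φ)} =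
           {p : SqMat R | IsHomogSq 𝒜 p.2 ∧ IsUnit ((p.2).map ⇑d₂.φ)}) :
    ∃ ψ : d₁.K ≃+* d₂.K,
      (∀ γ : Γ, ⇑ψ '' (d₁.grading γ : Set d₁.K) = (d₂.grading γ : Set d₂.K)) ∧
      ∀ r : R, ψ (d₁.φ r) = d₂.φ r := by
  classical
  have hone1 : (1 : R) ∈ 𝒜 1 := hone
  -- the coupling subring of the product
  set P : d₁.K × d₂.K → Prop := fun t => ∀ γ : Γ,
    Pair 𝒜 d₁ d₂ γ (pr d₁.grading d₁.internal γ t.1) (pr d₂.grading d₂.internal γ t.2)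
    with hP
  have Pzero : P 0 := by
    intro γ
    show Pair 𝒜 d₁ d₂ γ (pr d₁.grading d₁.internal γ 0) (pr d₂.grading d₂.internal γ 0)
    rw [pr_zero, pr_zero]
    simpa using pair_scalar (d₁ := d₁) (d₂ := d₂) hone1 ((𝒜 γ).zero_mem)
  have Pone : P 1 := by
    intro γ
    show Pair 𝒜 d₁ d₂ γ (pr d₁.grading d₁.internal γ 1) (pr d₂.grading d₂.internal γ 1)
    rw [pr_of_mem _ _ d₁.one_mem, pr_of_mem _ _ d₂.one_mem]
    by_cases hγ : γ = 1
    · subst hγ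
      rw [if_pos rfl, if_pos rfl]
      have := pair_scalar (d₁ := d₁) (d₂ := d₂) hone1 hone1
      simpa using this
    · rw [if_neg hγ, if_neg hγ]
      simpa using pair_scalar (d₁ := d₁) (d₂ := d₂) hone1 ((𝒜 γ).zero_mem)
  have Padd : ∀ {a b}, P a → P b → P (a + b) := by
    intro a b ha hb γ
    show Pair 𝒜 d₁ d₂ γ (pr d₁.grading d₁.internal γ (a.1 + b.1))
      (pr d₂.grading d₂.internal γ (a.2 + b.2))
    rw [pr_add, pr_add]
    exact pair_add (ha γ) (hb γ)
  have Pneg : ∀ {a}, P a → P (-a) := by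
    intro a ha γ
    show Pair 𝒜 d₁ d₂ γ (pr d₁.grading d₁.internal γ (-a.1))
      (pr d₂.grading d₂.internal γ (-a.2))
    rw [pr_neg, pr_neg]
    exact pair_neg (ha γ)
  have Pmul : ∀ {a b}, P a → P b → P (a * b) := by
    intro a b ha hb δ
    show Pair 𝒜 d₁ d₂ δ (pr d₁.grading d₁.internal δ (a.1 * b.1))
      (pr d₂.grading d₂.internal δ (a.2 * b.2))
    set s : Finset Γ := DFinsupp.support ((dec d₁.grading d₁.internal).symm a.1) ∪
      DFinsupp.support ((dec d₂.grading d₂.internal).symm a.2) with hs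
    rw [pr_mul d₁.grading d₁.internal (fun hx hy => d₁.mul_mem hx hy) a.1 b.1 δ s
        Finset.subset_union_left,
      pr_mul d₂.grading d₂.internal (fun hx hy => d₂.mul_mem hx hy) a.2 b.2 δ s
        Finset.subset_union_right]
    refine pair_sum s _ _ hone1 fun γ _ => ?_
    have := pair_mul hone1 (ha γ) (hb (γ⁻¹ * δ))
    have hγδ : γ * (γ⁻¹ * δ) = δ := by group
    rwa [hγδ] at this
  set T : Subring (d₁.K × d₂.K) :=
    { carrier := setOf P
      zero_mem' := Pzero
      one_mem' := Pone
      add_mem' := Padd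
      neg_mem' := Pneg
      mul_mem' := Pmul } with hT
  have hmemT : ∀ t : d₁.K × d₂.K, t ∈ T ↔ P t := fun t => Iff.rfl
  -- the image of R sits inside T
  have hφT : ∀ r : R, (d₁.φ r, d₂.φ r) ∈ T := by
    intro r
    rw [hmemT]
    intro γ
    show Pair 𝒜 d₁ d₂ γ (pr d₁.grading d₁.internal γ (d₁.φ r))
      (pr d₂.grading d₂.internal γ (d₂.φ r))
    have hr : ∀ {K : Type (max u v)} [Ring K] (f : R →+* K), f r =
        ∑ g ∈ DFinsupp.support ((dec 𝒜 hinternal).symm r), f (pr 𝒜 hinternal g r) := by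
      intro K _ f
      rw [← map_sum, sum_pr]
    have hcomp : ∀ (dd : GrDivRingHom Γ R 𝒜),
        pr dd.grading dd.internal γ (dd.φ r) =
        if γ ∈ DFinsupp.support ((dec 𝒜 hinternal).symm r) then dd.φ (pr 𝒜 hinternal γ r)
        else 0 := by
      intro dd
      rw [hr dd.φ, pr_sum]
      rw [Finset.sum_congr rfl (fun g _ => pr_of_mem dd.grading dd.internal
        (dd.map_mem (pr_mem 𝒜 hinternal g r)) γ)]
      exact Finset.sum_ite_eq _ _ _
    rw [hcomp d₁, hcomp d₂]
    by_cases hγ : γ ∈ DFinsupp.support ((dec 𝒜 hinternal).symm r)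
    · rw [if_pos hγ, if_pos hγ]
      exact pair_scalar hone1 (pr_mem 𝒜 hinternal γ r)
    · rw [if_neg hγ, if_neg hγ]
      simpa using pair_scalar (d₁ := d₁) (d₂ := d₂) hone1 ((𝒜 γ).zero_mem)
  -- kernel triviality in both directions
  have hzero₁ : ∀ u ∈ T, u.1 = 0 → u.2 = (0 : d₂.K) := by
    intro u hu h1
    refine eq_zero_of_pr d₂.grading d₂.internal _ fun γ => ?_
    have hp := (hmemT u).1 hu γ
    rw [h1, pr_zero] at hp
    exact pair_zero₁ hEq hone1 hp
  have hzero₂ : ∀ u ∈ T, u.2 = 0 → u.1 = (0 : d₁.K) := by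
    intro u hu h2
    refine eq_zero_of_pr d₁.grading d₁.internal _ fun γ => ?_
    have hp := (hmemT u).1 hu γ
    rw [h2, pr_zero] at hp
    exact pair_zero₂ hEq hone1 hp
  -- homogeneous pairs in T
  have hhomT : ∀ {γ : Γ} {x₁ : d₁.K} {x₂ : d₂.K}, Pair 𝒜 d₁ d₂ γ x₁ x₂ → (x₁, x₂) ∈ T := by
    intro γ x₁ x₂ hp
    rw [hmemT]
    intro δ
    show Pair 𝒜 d₁ d₂ δ (pr d₁.grading d₁.internal δ x₁) (pr d₂.grading d₂.internal δ x₂)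
    obtain ⟨hm1, hm2⟩ := pair_mem hp
    rw [pr_of_mem _ _ hm1, pr_of_mem _ _ hm2]
    by_cases hδ : δ = γ
    · rw [if_pos hδ, if_pos hδ]
      subst hδ
      exact hp
    · rw [if_neg hδ, if_neg hδ]
      simpa using pair_scalar (d₁ := d₁) (d₂ := d₂) hone1 ((𝒜 δ).zero_mem)
  -- the first projection of T is everything
  have hT₁ : T.map (RingHom.fst d₁.K d₂.K) = ⊤ := by
    refine hepi₁ _ ?_ ?_
    · rintro x ⟨r, rfl⟩
      exact ⟨(d₁.φ r, d₂.φ r), hφT r, rfl⟩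
    · rintro γ x y hxγ ⟨t, htT, htx⟩ hx0 hxy hyx
      have hp : Pair 𝒜 d₁ d₂ γ x (pr d₂.grading d₂.internal γ t.2) := by
        have hp0 := (hmemT t).1 htT γ
        rw [show t.1 = x from htx, pr_of_mem _ _ hxγ, if_pos rfl] at hp0
        exact hp0
      obtain ⟨y₁, y₂, e1, e2, e3, e4, hpinv⟩ := pair_inv hEq hone1 hp hx0
      have hyy : y = y₁ := by
        calc y = y * 1 := (mul_one y).symm
          _ = y * (x * y₁) := by rw [e1]
          _ = (y * x) * y₁ := (mul_assoc y x y₁).symm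
          _ = y₁ := by rw [hyx, one_mul]
      exact ⟨(y₁, y₂), hhomT hpinv, hyy.symm⟩
  -- the second projection of T is everything
  have hT₂ : T.map (RingHom.snd d₁.K d₂.K) = ⊤ := by
    refine hepi₂ _ ?_ ?_
    · rintro x ⟨r, rfl⟩
      exact ⟨(d₁.φ r, d₂.φ r), hφT r, rfl⟩
    · rintro γ x y hxγ ⟨t, htT, htx⟩ hx0 hxy hyx
      have hp : Pair 𝒜 d₁ d₂ γ (pr d₁.grading d₁.internal γ t.1) x := by
        have hp0 := (hmemT t).1 htT γ
        rw [show t.2 = x from htx, pr_of_mem _ _ hxγ, if_pos rfl] at hp0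
        exact hp0
      have hx1ne : pr d₁.grading d₁.internal γ t.1 ≠ 0 := by
        intro h0
        rw [h0] at hp
        exact hx0 (pair_zero₁ hEq hone1 hp)
      obtain ⟨y₁, y₂, e1, e2, e3, e4, hpinv⟩ := pair_inv hEq hone1 hp hx1ne
      have hyy : y = y₂ := by
        calc y = y * 1 := (mul_one y).symm
          _ = y * (x * y₂) := by rw [e3]
          _ = (y * x) * y₂ := (mul_assoc y x y₂).symm
          _ = y₂ := by rw [hyx, one_mul]
      exact ⟨(y₁, y₂), hhomT hpinv, hyy.symm⟩
  -- the two projections, as ring isomorphisms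
  set F₁ : T →+* d₁.K := (RingHom.fst d₁.K d₂.K).comp T.subtype with hF₁
  set F₂ : T →+* d₂.K := (RingHom.snd d₁.K d₂.K).comp T.subtype with hF₂
  have hF₁bij : Function.Bijective F₁ := by
    constructor
    · intro a b hab
      have hsub : ((a : d₁.K × d₂.K) - b) ∈ T := T.sub_mem a.2 b.2
      have h1 : ((a : d₁.K × d₂.K) - b).1 = 0 := by
        show (a : d₁.K × d₂.K).1 - (b : d₁.K × d₂.K).1 = 0
        rw [show (a : d₁.K × d₂.K).1 = F₁ a from rfl, show (b : d₁.K × d₂.K).1 = F₁ b from rfl,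
          hab, sub_self]
      have h2 := hzero₁ _ hsub h1
      apply Subtype.ext
      apply Prod.ext
      · exact sub_eq_zero.1 h1
      · exact sub_eq_zero.1 h2
    · intro x
      have : x ∈ T.map (RingHom.fst d₁.K d₂.K) := by rw [hT₁]; trivial
      obtain ⟨t, htT, htx⟩ := this
      exact ⟨⟨t, htT⟩, htx⟩
  have hF₂bij : Function.Bijective F₂ := by
    constructor
    · intro a b hab
      have hsub : ((a : d₁.K × d₂.K) - b) ∈ T := T.sub_mem a.2 b.2
      have h2 : ((a : d₁.K × d₂.K) - b).2 = 0 := by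
        show (a : d₁.K × d₂.K).2 - (b : d₁.K × d₂.K).2 = 0
        rw [show (a : d₁.K × d₂.K).2 = F₂ a from rfl, show (b : d₁.K × d₂.K).2 = F₂ b from rfl,
          hab, sub_self]
      have h1 := hzero₂ _ hsub h2
      apply Subtype.ext
      apply Prod.ext
      · exact sub_eq_zero.1 h1
      · exact sub_eq_zero.1 h2
    · intro x
      have : x ∈ T.map (RingHom.snd d₁.K d₂.K) := by rw [hT₂]; trivial
      obtain ⟨t, htT, htx⟩ := this
      exact ⟨⟨t, htT⟩, htx⟩
  set E₁ : T ≃+* d₁.K := RingEquiv.ofBijective F₁ hF₁bij with hE₁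
  set E₂ : T ≃+* d₂.K := RingEquiv.ofBijective F₂ hF₂bij with hE₂
  have hE₁app : ∀ t : T, E₁ t = (t : d₁.K × d₂.K).1 := fun t => rfl
  have hE₂app : ∀ t : T, E₂ t = (t : d₁.K × d₂.K).2 := fun t => rfl
  refine ⟨E₁.symm.trans E₂, ?_, ?_⟩
  · intro γ
    apply Set.eq_of_subset_of_subset
    · rintro y ⟨x, hx, rfl⟩
      set t : T := E₁.symm x with ht
      have htx : (t : d₁.K × d₂.K).1 = x := by
        rw [← hE₁app t, ht, E₁.apply_symm_apply]
      show E₂ t ∈ d₂.grading γ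
      rw [hE₂app]
      refine mem_of_pr d₂.grading d₂.internal _ γ fun δ hδ => ?_
      have hp := (hmemT _).1 t.2 δ
      rw [htx, pr_of_mem _ _ hx, if_neg hδ] at hp
      exact pair_zero₁ hEq hone1 hp
    · intro y hy
      set t : T := E₂.symm y with ht
      have hty : (t : d₁.K × d₂.K).2 = y := by
        rw [← hE₂app t, ht, E₂.apply_symm_apply]
      refine ⟨(t : d₁.K × d₂.K).1, ?_, ?_⟩
      · refine mem_of_pr d₁.grading d₁.internal _ γ fun δ hδ => ?_
        have hp := (hmemT _).1 t.2 δ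
        rw [hty, pr_of_mem _ _ hy, if_neg hδ] at hp
        exact pair_zero₂ hEq hone1 hp
      · show E₂ (E₁.symm ((t : d₁.K × d₂.K).1)) = y
        have : E₁.symm ((t : d₁.K × d₂.K).1) = t := by
          apply E₁.injective
          rw [E₁.apply_symm_apply, hE₁app]
        rw [this, hE₂app, hty]
  · intro r
    show E₂ (E₁.symm (d₁.φ r)) = d₂.φ r
    have hmem := hφT r
    have : E₁.symm (d₁.φ r) = ⟨(d₁.φ r, d₂.φ r), hmem⟩ := by
      apply E₁.injective
      rw [E₁.apply_symm_apply, hE₁app]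
    rw [this, hE₂app]
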